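/- Assume that for every k = 1,…,K either (a_{k0} > 1 and a_{k1} > 1) or (min(a_{k0}, a_{k1}) = 0 and max(a_{k0}, a_{k1}) = a_{k•} > 1). Then the LOOCV squared prediction error PE satisfies PE(0) ≤ PE(λ) for all λ ≥ 0 if and only if min(a_{k0}, a_{k1}) = 0 and a_{k•} > 1 for every k = 1,…,K, i.e. PE is minimized at λ = 0 if and only if there is complete separation in the data. -/

import Mathlib

/-- Leave-one-out cross-validated squared prediction error for a saturated model with `K`
categories, counts `a0 k` (nonevents) and `a1 k` (events), and ridge penalty `l`. -/
noncomputable def loocvPE (K : ℕ) (a0 a1 : Fin K → ℕ) (l : ℝ) : ℝ :=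
  (1 / ∑ k : Fin K, ((a0 k : ℝ) + (a1 k : ℝ))) *
    ∑ k : Fin K,
      ((a0 k : ℝ) *
          (((a1 k : ℝ) + 2 * l) / ((a0 k : ℝ) + (a1 k : ℝ) - 1 + 4 * l)) ^ 2 +
       (a1 k : ℝ) *
          (1 - ((a1 k : ℝ) - 1 + 2 * l) / ((a0 k : ℝ) + (a1 k : ℝ) - 1 + 4 * l)) ^ 2)

private lemma hasDerivAt_term (a b : ℝ) (hc : a + b - 1 ≠ 0) :
    HasDerivAt (fun l : ℝ =>
      a * ((b + 2 * l) / (a + b - 1 + 4 * l)) ^ 2 +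
      b * (1 - (b - 1 + 2 * l) / (a + b - 1 + 4 * l)) ^ 2)
      (-8 * a * b / (a + b - 1) ^ 3) 0 := by
  have h2l : HasDerivAt (fun l : ℝ => 2 * l) 2 0 := by
    simpa using (hasDerivAt_id (0:ℝ)).const_mul 2
  have h4l : HasDerivAt (fun l : ℝ => 4 * l) 4 0 := by
    simpa using (hasDerivAt_id (0:ℝ)).const_mul 4
  have hden : HasDerivAt (fun l : ℝ => a + b - 1 + 4 * l) 4 0 := h4l.const_add _
  have hden0 : a + b - 1 + 4 * (0:ℝ) ≠ 0 := by simpa using hc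
  have hq1 := (h2l.const_add b).fun_div hden hden0
  have hq2 := (h2l.const_add (b - 1)).fun_div hden hden0
  have h1 := (hq1.fun_pow 2).const_mul a
  have h2 := (((hasDerivAt_const (0:ℝ) (1:ℝ)).fun_sub hq2).fun_pow 2).const_mul b
  have hsum := h1.fun_add h2
  refine hsum.congr_deriv ?_
  norm_num
  field_simp
  ring

/-- Assume each category either has both counts `> 1` or is separated
(`min = 0`, `max = a_{k•} > 1`). Then the LOOCV squared prediction error is minimized
at `λ = 0` if and only if there is complete separation in the data. -/
theorem stmt13 (K : ℕ) (hK : 1 ≤ K) (a0 a1 : Fin K → ℕ)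
    (hn : 0 < ∑ k : Fin K, (a0 k + a1 k))
    (h : ∀ k, (1 < a0 k ∧ 1 < a1 k) ∨
      (min (a0 k) (a1 k) = 0 ∧ max (a0 k) (a1 k) = a0 k + a1 k ∧ 1 < a0 k + a1 k)) :
    (∀ l : ℝ, 0 ≤ l → loocvPE K a0 a1 0 ≤ loocvPE K a0 a1 l) ↔
      (∀ k, min (a0 k) (a1 k) = 0 ∧ 1 < a0 k + a1 k) := by
  classical
  have hnk : ∀ k, 2 ≤ a0 k + a1 k := by
    intro k; rcases h k with ⟨h1, h2⟩ | ⟨_, _, h3⟩ <;> omega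
  have hckR : ∀ k, (1 : ℝ) ≤ (a0 k : ℝ) + (a1 k : ℝ) - 1 := by
    intro k
    have : (2 : ℝ) ≤ (a0 k : ℝ) + (a1 k : ℝ) := by exact_mod_cast hnk k
    linarith
  have hNpos : (0 : ℝ) < ∑ k : Fin K, ((a0 k : ℝ) + (a1 k : ℝ)) := by
    have : (0 : ℝ) < ((∑ k : Fin K, (a0 k + a1 k) : ℕ) : ℝ) := by exact_mod_cast hn
    simpa [Nat.cast_sum] using this
  constructor
  · intro hmin k
    by_contra hk
    have hbad : 1 < a0 k ∧ 1 < a1 k := by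
      rcases h k with hb | ⟨h1, h2, h3⟩
      · exact hb
      · exact absurd ⟨h1, h3⟩ hk
    set F : ℝ → ℝ := fun l => ∑ j : Fin K,
      ((a0 j : ℝ) *
          (((a1 j : ℝ) + 2 * l) / ((a0 j : ℝ) + (a1 j : ℝ) - 1 + 4 * l)) ^ 2 +
       (a1 j : ℝ) *
          (1 - ((a1 j : ℝ) - 1 + 2 * l) / ((a0 j : ℝ) + (a1 j : ℝ) - 1 + 4 * l)) ^ 2) with hFdef
    have hF : HasDerivAt F
        (∑ j : Fin K, -8 * (a0 j : ℝ) * (a1 j : ℝ) / ((a0 j : ℝ) + (a1 j : ℝ) - 1) ^ 3) 0 :=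
      HasDerivAt.fun_sum fun j _ => hasDerivAt_term _ _ (by have := hckR j; linarith)
    have hD : (∑ j : Fin K, -8 * (a0 j : ℝ) * (a1 j : ℝ) / ((a0 j : ℝ) + (a1 j : ℝ) - 1) ^ 3) < 0 := by
      have hlt : (∑ j : Fin K, -8 * (a0 j : ℝ) * (a1 j : ℝ) / ((a0 j : ℝ) + (a1 j : ℝ) - 1) ^ 3)
          < ∑ _j : Fin K, (0 : ℝ) := by
        apply Finset.sum_lt_sum
        · intro j _
          apply div_nonpos_of_nonpos_of_nonneg
          · have h0 : (0:ℝ) ≤ (a0 j : ℝ) := Nat.cast_nonneg _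
            have h1 : (0:ℝ) ≤ (a1 j : ℝ) := Nat.cast_nonneg _
            nlinarith
          · have := hckR j; positivity
        · refine ⟨k, Finset.mem_univ k, ?_⟩
          apply div_neg_of_neg_of_pos
          · have h0 : (2:ℝ) ≤ (a0 k : ℝ) := by exact_mod_cast hbad.1
            have h1 : (2:ℝ) ≤ (a1 k : ℝ) := by exact_mod_cast hbad.2
            nlinarith
          · have := hckR k; positivity
      simpa using hlt
    have htend := hasDerivAt_iff_tendsto_slope.mp hF
    have hev : ∀ᶠ x in nhdsWithin (0:ℝ) {(0:ℝ)}ᶜ, slope F 0 x < 0 :=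
      htend.eventually_lt_const hD
    have hev' : ∀ᶠ x in nhdsWithin (0:ℝ) (Set.Ioi 0), slope F 0 x < 0 :=
      hev.filter_mono (nhdsWithin_mono 0 (fun x hx => ne_of_gt hx))
    obtain ⟨l, hsl, hl⟩ := (hev'.and eventually_mem_nhdsWithin).exists
    have hl0 : (0:ℝ) < l := hl
    have hFl : F l < F 0 := by
      rw [slope_def_field] at hsl
      have := (div_neg_iff.mp hsl)
      rcases this with ⟨h1, h2⟩ | ⟨h1, h2⟩
      · linarith
      · linarith
    have hle := hmin l hl0.le
    have hle' : (1 / ∑ k : Fin K, ((a0 k : ℝ) + (a1 k : ℝ))) * F 0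
        ≤ (1 / ∑ k : Fin K, ((a0 k : ℝ) + (a1 k : ℝ))) * F l := hle
    have hinv : (0:ℝ) < 1 / ∑ k : Fin K, ((a0 k : ℝ) + (a1 k : ℝ)) := by positivity
    have := (mul_le_mul_iff_right₀ hinv).mp hle'
    linarith
  · intro hsep l hl
    have hPE0 : loocvPE K a0 a1 0 = 0 := by
      unfold loocvPE
      have hz : ∑ k : Fin K,
          ((a0 k : ℝ) *
              (((a1 k : ℝ) + 2 * (0:ℝ)) / ((a0 k : ℝ) + (a1 k : ℝ) - 1 + 4 * (0:ℝ))) ^ 2 +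
           (a1 k : ℝ) *
              (1 - ((a1 k : ℝ) - 1 + 2 * (0:ℝ)) / ((a0 k : ℝ) + (a1 k : ℝ) - 1 + 4 * (0:ℝ))) ^ 2)
          = 0 := by
        apply Finset.sum_eq_zero
        intro k _
        rcases Nat.min_eq_zero_iff.mp (hsep k).1 with h0 | h0
        · have h1 : 2 ≤ a1 k := by have := (hsep k).2; omega
          have h1R : (1:ℝ) ≤ (a1 k : ℝ) - 1 := by
            have : (2:ℝ) ≤ (a1 k : ℝ) := by exact_mod_cast h1
            linarith
          have hne : (a1 k : ℝ) - 1 ≠ 0 := by linarith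
          simp [h0, hne, div_self]
        · simp [h0]
      rw [hz, mul_zero]
    rw [hPE0]
    unfold loocvPE
    have h1 : (0:ℝ) ≤ 1 / ∑ k : Fin K, ((a0 k : ℝ) + (a1 k : ℝ)) := by positivity
    apply mul_nonneg h1
    apply Finset.sum_nonneg
    intro k _
    positivity
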